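/- Let p be an odd prime, k a positive integer, and a an integer. Then |Σ_{v mod p^k, v² ≡ a (mod p^k)} e(2v/p^k)| ≤ 2, where e(t) = e^{2πit} and the sum is over residues v modulo p^k satisfying v² ≡ a (mod p^k). -/

import Mathlib

open scoped BigOperators

/-- `e x = e^{2πix}`. -/
noncomputable def e (x : ℝ) : ℂ := Complex.exp (2 * (Real.pi : ℂ) * Complex.I * (x : ℂ))

lemma e_add (x y : ℝ) : e (x + y) = e x * e y := by
  simp [e, ← Complex.exp_add]; ring_nf

lemma e_int (m : ℤ) : e m = 1 := by
  unfold e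
  rw [show 2 * (Real.pi : ℂ) * Complex.I * ((m : ℝ) : ℂ) = (m : ℤ) * (2 * Real.pi * Complex.I) by push_cast; ring]
  exact Complex.exp_int_mul_two_pi_mul_I m

lemma abs_e (x : ℝ) : ‖e x‖ = 1 := by
  unfold e
  rw [Complex.norm_exp]
  norm_num [Complex.mul_re, Complex.mul_im]

lemma e_mod (m n : ℕ) (h : 0 < n) : e (2 * ((m % n : ℕ) : ℝ) / n) = e (2 * (m : ℝ) / n) := by
  set q : ℕ := m / n with hq
  set r : ℕ := m % n with hr
  have hm : (m : ℝ) = n * q + r := by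
    exact_mod_cast (Nat.div_add_mod m n).symm
  have hn : (n : ℝ) ≠ 0 := by positivity
  rw [hm, show 2 * ((n : ℝ) * q + r) / n = 2 * (r : ℝ) / n + 2 * (q : ℝ) by field_simp; ring]
  rw [e_add, show (2 * (q : ℝ)) = ((2 * q : ℤ) : ℝ) by push_cast; ring, e_int]
  ring

/-- For an odd prime `p`, `k ≥ 1`, and any integer `a`,
`|Σ_{v mod p^k, v² ≡ a (mod p^k)} e(2v/p^k)| ≤ 2`. -/
theorem square_root_exp_sum_bound (p : ℕ) (hp : p.Prime) (hodd : Odd p)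
    (k : ℕ) (hk : 0 < k) (a : ℤ) :
    ‖(∑ v ∈ (Finset.range (p ^ k)).filter
        (fun v : ℕ => (v : ZMod (p ^ k)) ^ 2 = (a : ZMod (p ^ k))),
      e ((2 * (v : ℝ)) / (p : ℝ) ^ k))‖ ≤ 2 := by
  haveI : Fact p.Prime := ⟨hp⟩
  have hn0 : 0 < p ^ k := pow_pos hp.pos k
  haveI : NeZero (p ^ k) := ⟨hn0.ne'⟩
  set n := p ^ k with hn
  -- the projection to ZMod p
  set φ : ZMod n →+* ZMod p := ZMod.castHom (dvd_pow_self p hk.ne') (ZMod p) with hφ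
  have φnat : ∀ m : ℕ, φ ((m : ZMod n)) = (m : ZMod p) := fun m => map_natCast φ m
  have φval : ∀ z : ZMod n, φ z = ((z.val : ℕ) : ZMod p) := by
    intro z
    conv_lhs => rw [← ZMod.natCast_rightInverse z]
    exact φnat z.val
  -- unit criterion
  have unitOf : ∀ z : ZMod n, φ z ≠ 0 → IsUnit z := by
    intro z hz
    have hz' : ((z.val : ℕ) : ZMod p) ≠ 0 := by rwa [← φval]
    have hpd : ¬ p ∣ z.val := fun h => hz' ((ZMod.natCast_eq_zero_iff _ _).mpr h)
    have hcop : Nat.Coprime z.val n :=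
      Nat.Coprime.pow_right k (Nat.coprime_comm.mp (hp.coprime_iff_not_dvd.mpr hpd))
    have := (ZMod.isUnit_iff_coprime z.val n).mpr hcop
    rwa [ZMod.natCast_rightInverse z] at this
  -- annihilation criterion
  have annOf : ∀ z : ZMod n, φ z = 0 → ((p ^ (k-1) : ℕ) : ZMod n) * z = 0 := by
    intro z hz
    have hz' : ((z.val : ℕ) : ZMod p) = 0 := by rwa [← φval]
    obtain ⟨t, ht⟩ := (ZMod.natCast_eq_zero_iff _ _).mp hz'
    have hzz : z = ((p * t : ℕ) : ZMod n) := by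
      rw [← ht, ZMod.natCast_rightInverse z]
    rw [hzz, ← Nat.cast_mul, ← mul_assoc, ← pow_succ, Nat.sub_add_cancel hk, ← hn,
      Nat.cast_mul, ZMod.natCast_self, zero_mul]
  -- rewrite the sum over ZMod n
  set S : Finset (ZMod n) := Finset.univ.filter (fun x => x ^ 2 = (a : ZMod n)) with hS
  set g : ZMod n → ℂ := fun x => e (2 * (x.val : ℝ) / (n : ℝ)) with hg
  have hsum : (∑ v ∈ (Finset.range n).filter
        (fun v : ℕ => (v : ZMod n) ^ 2 = (a : ZMod n)),
      e ((2 * (v : ℝ)) / (p : ℝ) ^ k)) = ∑ x ∈ S, g x := by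
    apply Finset.sum_nbij' (i := fun v : ℕ => (v : ZMod n)) (j := ZMod.val)
    · intro v hv
      simp only [Finset.mem_filter, Finset.mem_range] at hv
      simp [hS, hv.2]
    · intro x hx
      simp only [hS, Finset.mem_filter, Finset.mem_univ, true_and] at hx
      simp only [Finset.mem_filter, Finset.mem_range]
      refine ⟨x.val_lt, ?_⟩
      rw [ZMod.natCast_rightInverse x]; exact hx
    · intro v hv
      simp only [Finset.mem_filter, Finset.mem_range] at hv
      exact ZMod.val_cast_of_lt hv.1
    · intro x _; exact ZMod.natCast_rightInverse x
    · intro v hv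
      simp only [Finset.mem_filter, Finset.mem_range] at hv
      rw [hg]
      simp only
      rw [ZMod.val_cast_of_lt hv.1]
      norm_num [hn]
  rw [hsum]
  -- a generic bound by cardinality
  have habs : ‖∑ x ∈ S, g x‖ ≤ (S.card : ℝ) := by
    refine le_trans (norm_sum_le _ _) ?_
    rw [show (S.card : ℝ) = ∑ _x ∈ S, (1:ℝ) by simp]
    exact Finset.sum_le_sum (fun x _ => by rw [hg]; exact le_of_eq (abs_e _))
  by_cases hpa : (p : ℤ) ∣ a
  · -- p divides a
    have haz : ((a : ℤ) : ZMod p) = 0 := (ZMod.intCast_zmod_eq_zero_iff_dvd _ _).mpr hpa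
    have hφa : φ ((a : ZMod n)) = 0 := by rw [map_intCast, haz]
    have hsolz : ∀ x ∈ S, φ x = 0 := by
      intro x hx
      simp only [hS, Finset.mem_filter, Finset.mem_univ, true_and] at hx
      have : (φ x) ^ 2 = 0 := by rw [← map_pow, hx, hφa]
      exact pow_eq_zero_iff (n := 2) (by norm_num) |>.mp this
    rcases Nat.lt_or_ge k 2 with hk2 | hk2
    · -- k = 1
      have hk1 : k = 1 := by omega
      have hsub : S ⊆ {0} := by
        intro x hx
        have h0 : φ x = 0 := hsolz x hx
        have : ((p^(k-1) : ℕ) : ZMod n) * x = 0 := annOf x h0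
        rw [hk1] at this
        simpa using this
      have : S.card ≤ 1 := le_trans (Finset.card_le_card hsub) (by simp)
      refine le_trans habs ?_
      have : (S.card : ℝ) ≤ 1 := by exact_mod_cast this
      linarith
    · -- k ≥ 2 : full cancellation
      set c : ZMod n := ((p ^ (k-1) : ℕ) : ZMod n) with hc
      have hcc : c * c = 0 := by
        rw [hc, ← Nat.cast_mul, ← pow_add]
        rw [ZMod.natCast_eq_zero_iff]
        exact pow_dvd_pow p (by omega)
      have hφc : φ c = 0 := by
        rw [hc, φnat, ZMod.natCast_eq_zero_iff]
        exact dvd_pow_self p (by omega)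
      have hmem : ∀ x : ZMod n, x ∈ S ↔ x + c ∈ S := by
        intro x
        simp only [hS, Finset.mem_filter, Finset.mem_univ, true_and]
        constructor
        · intro hx
          have hx0 : φ x = 0 := hsolz x (by simp [hS, hx])
          have hcx : c * x = 0 := annOf x hx0
          have : (x + c)^2 = x^2 + 2*(c*x) + c*c := by ring
          rw [this, hcx, hcc, hx]; ring
        · intro hx
          have hx0 : φ (x + c) = 0 := by
            have : (φ (x+c)) ^ 2 = 0 := by rw [← map_pow, hx, hφa]
            exact pow_eq_zero_iff (n := 2) (by norm_num) |>.mp this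
          have hx0' : φ x = 0 := by
            have := hx0; rw [map_add, hφc, add_zero] at this; exact this
          have hcx : c * x = 0 := annOf x hx0'
          have : x^2 = (x + c)^2 - 2*(c*x) - c*c := by ring
          rw [this, hcx, hcc, hx]; ring
      -- translation multiplies the sum by ε
      have hcval : c.val = p ^ (k-1) := by
        rw [hc, ZMod.val_natCast, Nat.mod_eq_of_lt]
        exact Nat.pow_lt_pow_right hp.one_lt (by omega)
      set ε : ℂ := e (2 * ((p ^ (k-1) : ℕ) : ℝ) / (n : ℝ)) with hε
      have hge : ∀ x : ZMod n, g (x + c) = ε * g x := by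
        intro x
        rw [hg]; simp only
        rw [ZMod.val_add, hcval, e_mod _ _ hn0]
        rw [show 2 * ((x.val + p^(k-1) : ℕ) : ℝ) / n
            = 2 * (x.val : ℝ) / n + 2 * ((p^(k-1) : ℕ) : ℝ) / n by push_cast; ring]
        rw [e_add, hε]; ring
      have htrans : ∑ x ∈ S, g x = ε * ∑ x ∈ S, g x := by
        conv_lhs => rw [show (∑ x ∈ S, g x) = ∑ x ∈ S, g (x + c) from
          Finset.sum_nbij' (i := fun x => x - c) (j := fun x => x + c)
            (fun x hx => (hmem (x - c)).mpr (by rwa [sub_add_cancel]))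
            (fun x hx => (hmem x).mp hx)
            (fun x _ => by ring) (fun x _ => by ring)
            (fun x _ => by rw [sub_add_cancel])]
        rw [Finset.mul_sum]
        exact Finset.sum_congr rfl (fun x _ => hge x)
      have hεne : ε ≠ 1 := by
        rw [hε]
        unfold e
        intro h
        rw [Complex.exp_eq_one_iff] at h
        obtain ⟨m, hm⟩ := h
        have hre : (2 * ((p ^ (k-1) : ℕ) : ℝ) / (n : ℝ)) = (m : ℝ) := by
          have h2 : (2 * (Real.pi:ℂ) * Complex.I) ≠ 0 := by
            simp [Real.pi_ne_zero, Complex.I_ne_zero]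
          have : ((2 * ((p ^ (k-1) : ℕ) : ℝ) / (n : ℝ) : ℝ) : ℂ) = ((m : ℝ) : ℂ) := by
            apply mul_left_cancel₀ h2
            rw [hm]; push_cast; ring
          exact_mod_cast this
        have hval : (2 * ((p ^ (k-1) : ℕ) : ℝ) / (n : ℝ)) = 2 / p := by
          rw [hn]
          push_cast
          rw [show ((p:ℝ))^k = (p:ℝ)^(k-1)*p from by rw [← pow_succ, Nat.sub_add_cancel hk]]
          have hppos : (0:ℝ) < p := by exact_mod_cast hp.pos
          rw [div_eq_div_iff (by positivity) (by positivity)]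
          ring
        have hp3 : (3:ℝ) ≤ p := by
          have := hp.two_le
          rcases hodd with ⟨t, ht⟩
          have : 3 ≤ p := by omega
          exact_mod_cast this
        rw [hval] at hre
        have h1 : (0:ℝ) < (m:ℝ) := by rw [← hre]; positivity
        have h2 : (m:ℝ) < 1 := by
          rw [← hre]
          rw [div_lt_one (by linarith)]
          linarith
        have : (0:ℤ) < m := by exact_mod_cast h1
        have : (m:ℝ) ≥ 1 := by exact_mod_cast this
        linarith
      have hzero : ∑ x ∈ S, g x = 0 := by
        have hmul : (1 - ε) * (∑ x ∈ S, g x) = 0 := by linear_combination htrans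
        rcases mul_eq_zero.mp hmul with h | h
        · exact absurd (by linear_combination -h : ε = 1) hεne
        · exact h
      rw [hzero]
      simp
  · -- p does not divide a: at most two solutions
    have hφa : φ ((a : ZMod n)) ≠ 0 := by
      rw [map_intCast]
      exact fun h => hpa ((ZMod.intCast_zmod_eq_zero_iff_dvd _ _).mp h)
    have hcard : S.card ≤ 2 := by
      rcases Finset.eq_empty_or_nonempty S with h | ⟨x₀, hx₀⟩
      · simp [h]
      have hx₀' : x₀ ^ 2 = (a : ZMod n) := by
        simpa [hS] using hx₀
      have hsolu : ∀ x ∈ S, φ x ≠ 0 := by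
        intro x hx h0
        have hx' : x ^ 2 = (a : ZMod n) := by simpa [hS] using hx
        apply hφa
        rw [← hx', map_pow, h0]; ring
      have hsub : S ⊆ {x₀, -x₀} := by
        intro y hy
        have hy' : y ^ 2 = (a : ZMod n) := by simpa [hS] using hy
        have hfac : (y - x₀) * (y + x₀) = 0 := by
          have : (y - x₀) * (y + x₀) = y^2 - x₀^2 := by ring
          rw [this, hy', hx₀', sub_self]
        have hnotboth : ¬ (φ (y - x₀) = 0 ∧ φ (y + x₀) = 0) := by
          rintro ⟨h1, h2⟩
          have : φ (2 * y) = 0 := by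
            have : (2 : ZMod n) * y = (y + x₀) + (y - x₀) := by ring
            rw [this, map_add, h1, h2, add_zero]
          rw [map_mul] at this
          have h2p : (φ (2 : ZMod n)) = (2 : ZMod p) := by
            rw [show (2 : ZMod n) = ((2:ℕ) : ZMod n) by norm_num, φnat]; norm_num
          have h2ne : (2 : ZMod p) ≠ 0 := by
            intro h
            have := (ZMod.natCast_eq_zero_iff 2 p).mp (by exact_mod_cast h)
            rcases hodd with ⟨t, ht⟩
            have h2le := hp.two_le
            have := Nat.le_of_dvd (by norm_num) this
            omega
          rw [h2p] at this
          have : φ y = 0 := by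
            rcases mul_eq_zero.mp this with h | h
            · exact absurd h h2ne
            · exact h
          exact (hsolu y hy) this
        rcases eq_or_ne (φ (y + x₀)) 0 with h1 | h1
        · -- then y - x₀ is a unit, y + x₀ = 0
          have h2 : φ (y - x₀) ≠ 0 := fun h => hnotboth ⟨h, h1⟩
          have hu := unitOf _ h2
          have : y + x₀ = 0 := by
            have := hfac
            rcases hu with ⟨u, hu'⟩
            calc y + x₀ = (↑u⁻¹ * u) * (y + x₀) := by simp
            _ = ↑u⁻¹ * ((y - x₀) * (y + x₀)) := by rw [hu']; ring
            _ = 0 := by rw [hfac]; ring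
          simp only [Finset.mem_insert, Finset.mem_singleton]
          right
          linear_combination this
        · have hu := unitOf _ h1
          have : y - x₀ = 0 := by
            rcases hu with ⟨u, hu'⟩
            calc y - x₀ = (y - x₀) * (u * ↑u⁻¹) := by simp
            _ = ((y - x₀) * (y + x₀)) * ↑u⁻¹ := by rw [hu']; ring
            _ = 0 := by rw [hfac]; ring
          simp only [Finset.mem_insert, Finset.mem_singleton]
          left
          linear_combination this
      refine le_trans (Finset.card_le_card hsub) ?_
      refine le_trans (Finset.card_insert_le _ _) ?_
      simp
    refine le_trans habs ?_
    exact_mod_cast hcard
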